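/- Let f be a convex function on ℝ^n with minimizer x*, set R = ‖x^0 − x*‖₂, and assume every subgradient g of f at any point x with ‖x − x*‖₂ ≤ √2·R satisfies ‖g‖₂ ≤ M. Let N ≥ 1, h = R/(M√N), and define x^{k+1} = x^k − h g^k where g^k is a subgradient of f at x^k. Then the average x̄^N = (1/N)·Σ_{k=0}^{N−1} x^k satisfies f(x̄^N) − f(x*) ≤ M R/√N. -/

import Mathlib

open scoped RealInnerProductSpace

/-- Convergence rate of the fixed-step subgradient method:
`f(x̄_N) - f(x*) ≤ M R / √N`. -/
theorem subgradient_method_rate {n : ℕ}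
    (f : EuclideanSpace ℝ (Fin n) → ℝ) (hf : ConvexOn ℝ Set.univ f)
    (xstar : EuclideanSpace ℝ (Fin n)) (hxstar : ∀ z, f xstar ≤ f z)
    (x0 : EuclideanSpace ℝ (Fin n)) (M R : ℝ) (hM : 0 < M)
    (hR : R = ‖x0 - xstar‖)
    (hMbound : ∀ x gx : EuclideanSpace ℝ (Fin n),
      (∀ z, f x + ⟪gx, z - x⟫ ≤ f z) → ‖x - xstar‖ ≤ Real.sqrt 2 * R → ‖gx‖ ≤ M)
    (N : ℕ) (hN : 1 ≤ N) (h : ℝ) (hh : h = R / (M * Real.sqrt N))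
    (x g : ℕ → EuclideanSpace ℝ (Fin n))
    (hx0 : x 0 = x0)
    (hsub : ∀ k z, f (x k) + ⟪g k, z - x k⟫ ≤ f z)
    (hrec : ∀ k, x (k + 1) = x k - h • g k) :
    f ((N : ℝ)⁻¹ • ∑ k ∈ Finset.range N, x k) - f xstar ≤ M * R / Real.sqrt N := by
  have hN0 : (0:ℝ) < N := by exact_mod_cast Nat.lt_of_lt_of_le Nat.zero_lt_one hN
  have hsN : 0 < Real.sqrt N := Real.sqrt_pos.2 hN0
  have hsq : Real.sqrt N ^ 2 = N := Real.sq_sqrt hN0.le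
  have hR0 : 0 ≤ R := hR ▸ norm_nonneg _
  have hgap : ∀ j, 0 ≤ f (x j) - f xstar := fun j => sub_nonneg.2 (hxstar _)
  have hh0 : 0 ≤ h := by rw [hh]; positivity
  have hhM : h ^ 2 * M ^ 2 = R ^ 2 / N := by
    rw [hh, div_pow, mul_pow, hsq]
    field_simp
  have key : ∀ k, k ≤ N →
      ‖x k - xstar‖ ^ 2 + 2 * h * ∑ j ∈ Finset.range k, (f (x j) - f xstar)
        ≤ R ^ 2 + k * (h ^ 2 * M ^ 2) := by
    intro k
    induction k with
    | zero => intro _; simp [hx0, hR]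
    | succ k ih =>
      intro hk1
      have hk : k ≤ N := Nat.le_of_succ_le hk1
      have ihk := ih hk
      have hsum0 : 0 ≤ ∑ j ∈ Finset.range k, (f (x j) - f xstar) :=
        Finset.sum_nonneg fun j _ => hgap j
      have hkN : (k : ℝ) ≤ N := by exact_mod_cast hk
      have h2 : (k : ℝ) * (h ^ 2 * M ^ 2) ≤ R ^ 2 := by
        rw [hhM]
        have hd : 0 ≤ R ^ 2 / N := div_nonneg (sq_nonneg R) hN0.le
        calc (k : ℝ) * (R ^ 2 / N) ≤ N * (R ^ 2 / N) := by nlinarith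
          _ = R ^ 2 := by field_simp
      have hDk : ‖x k - xstar‖ ^ 2 ≤ 2 * R ^ 2 := by nlinarith
      have hnorm : ‖x k - xstar‖ ≤ Real.sqrt 2 * R := by
        have e1 : ‖x k - xstar‖ = Real.sqrt (‖x k - xstar‖ ^ 2) :=
          (Real.sqrt_sq (norm_nonneg _)).symm
        rw [e1]
        calc Real.sqrt (‖x k - xstar‖ ^ 2) ≤ Real.sqrt (2 * R ^ 2) :=
              Real.sqrt_le_sqrt hDk
          _ = Real.sqrt 2 * R := by
              rw [Real.sqrt_mul (by norm_num), Real.sqrt_sq hR0]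
      have hg : ‖g k‖ ≤ M := hMbound _ _ (hsub k) hnorm
      have hexp : ‖x (k+1) - xstar‖ ^ 2
          = ‖x k - xstar‖ ^ 2 - 2 * h * ⟪g k, x k - xstar⟫ + h ^ 2 * ‖g k‖ ^ 2 := by
        rw [hrec k]
        have e : x k - h • g k - xstar = (x k - xstar) - h • g k := by abel
        rw [e, norm_sub_sq_real, real_inner_smul_right,
          real_inner_comm (x k - xstar) (g k), norm_smul, Real.norm_eq_abs,
          mul_pow, sq_abs]
        ring
      have hsg : f (x k) - f xstar ≤ ⟪g k, x k - xstar⟫ := by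
        have h1 := hsub k xstar
        have h2 : ⟪g k, xstar - x k⟫ = -⟪g k, x k - xstar⟫ := by
          rw [← inner_neg_right, neg_sub]
        rw [h2] at h1
        linarith
      have hgg : h ^ 2 * ‖g k‖ ^ 2 ≤ h ^ 2 * M ^ 2 :=
        mul_le_mul_of_nonneg_left (pow_le_pow_left₀ (norm_nonneg _) hg 2) (sq_nonneg h)
      have hmul := mul_le_mul_of_nonneg_left hsg (by linarith : (0:ℝ) ≤ 2 * h)
      have hstep : ‖x (k+1) - xstar‖ ^ 2
          ≤ ‖x k - xstar‖ ^ 2 - 2 * h * (f (x k) - f xstar) + h ^ 2 * M ^ 2 := by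
        rw [hexp]; linarith
      rw [Finset.sum_range_succ]
      push_cast
      linarith [hstep, ihk]
  have keyN := key N le_rfl
  have hsumN : ∑ j ∈ Finset.range N, (f (x j) - f xstar) ≤ M * R * Real.sqrt N := by
    have hnn := sq_nonneg ‖x N - xstar‖
    have hNM : (N : ℝ) * (h ^ 2 * M ^ 2) = R ^ 2 := by
      rw [hhM]; field_simp
    have h2R : 2 * h * ∑ j ∈ Finset.range N, (f (x j) - f xstar) ≤ 2 * R ^ 2 := by
      linarith [keyN]
    rcases eq_or_lt_of_le hR0 with hR0' | hRpos
    · -- R = 0 : every iterate stays at xstar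
      have hzero : h = 0 := by rw [hh, ← hR0']; simp
      have hxk : ∀ k, x k = xstar := by
        intro k
        induction k with
        | zero =>
          rw [hx0]
          have : ‖x0 - xstar‖ = 0 := by rw [← hR, ← hR0']
          exact sub_eq_zero.mp (norm_eq_zero.mp this)
        | succ k ih => rw [hrec k, hzero, zero_smul, sub_zero, ih]
      have : ∀ j ∈ Finset.range N, f (x j) - f xstar = 0 := by
        intro j _; rw [hxk j]; ring
      rw [Finset.sum_congr rfl this, Finset.sum_const, smul_zero]
      positivity
    · have hhpos : 0 < h := by rw [hh]; positivity
      have hRh : h * (M * R * Real.sqrt N) = R ^ 2 := by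
        rw [hh]
        field_simp
      rw [← mul_le_mul_iff_right₀ hhpos, hRh]
      nlinarith [h2R]
  have hjen : f ((N : ℝ)⁻¹ • ∑ k ∈ Finset.range N, x k)
      ≤ ∑ k ∈ Finset.range N, (N : ℝ)⁻¹ * f (x k) := by
    rw [Finset.smul_sum]
    exact hf.map_sum_le (fun i _ => by positivity)
      (by rw [Finset.sum_const, Finset.card_range, nsmul_eq_mul, mul_inv_cancel₀ hN0.ne'])
      (fun i _ => Set.mem_univ _)
  have hsplit : ∑ k ∈ Finset.range N, (N : ℝ)⁻¹ * f (x k) - f xstar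
      = (N : ℝ)⁻¹ * ∑ j ∈ Finset.range N, (f (x j) - f xstar) := by
    have e1 : (N : ℝ)⁻¹ * ∑ j ∈ Finset.range N, (f (x j) - f xstar)
        = ∑ j ∈ Finset.range N, ((N : ℝ)⁻¹ * f (x j) - (N : ℝ)⁻¹ * f xstar) := by
      rw [Finset.mul_sum]
      exact Finset.sum_congr rfl fun j _ => by ring
    rw [e1, Finset.sum_sub_distrib, Finset.sum_const, Finset.card_range,
      nsmul_eq_mul, ← mul_assoc, mul_inv_cancel₀ hN0.ne', one_mul]
  have hss : Real.sqrt N * Real.sqrt N = (N : ℝ) := Real.mul_self_sqrt hN0.le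
  have hfin : (N : ℝ)⁻¹ * (M * R * Real.sqrt N) = M * R / Real.sqrt N := by
    field_simp
    linear_combination R * hss
  have hmul2 : (N : ℝ)⁻¹ * ∑ j ∈ Finset.range N, (f (x j) - f xstar)
      ≤ (N : ℝ)⁻¹ * (M * R * Real.sqrt N) :=
    mul_le_mul_of_nonneg_left hsumN (by positivity)
  linarith [hjen, hsplit.le, hsplit.ge, hfin.le, hfin.ge, hmul2]
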